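/- Let 0 < λ < 1 and λ ≤ ρ < 1. Let K' be a 2×2 real symmetric positive definite matrix such that the matrix [[1,ρ],[ρ,1]] − K' is positive semidefinite. Then (1/2)·log(2πe·K'₁₁) + (1/2)·log(2πe·K'₂₂) − ((1+λ)/2)·log((2πe)²·det K') ≥ (1/2)·log(1/(1−λ²)) − (λ/2)·log((2πe)²·(1−ρ)²·(1+λ)/(1−λ)). -/

import Mathlib

open Real


lemma stepA_mono (lam t P m : ℝ) (hlam0 : 0 < lam) (hm : 0 ≤ m) (htm : m < t)
    (htP : t ≤ P) :
    Real.log P - ((1 + lam) / 2) * Real.log (P ^ 2 - m ^ 2)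
      ≤ Real.log t - ((1 + lam) / 2) * Real.log (t ^ 2 - m ^ 2) := by
  have ht : 0 < t := lt_of_le_of_lt hm htm
  have hP0 : 0 < P := lt_of_lt_of_le ht htP
  have hX : 0 < t ^ 2 - m ^ 2 := by nlinarith
  have hXY : t ^ 2 - m ^ 2 ≤ P ^ 2 - m ^ 2 := by nlinarith
  have hY0 : 0 < P ^ 2 - m ^ 2 := lt_of_lt_of_le hX hXY
  have hB : Real.log (t ^ 2 - m ^ 2) ≤ Real.log (P ^ 2 - m ^ 2) := Real.log_le_log hX hXY
  have h5 : P ^ 2 * (t ^ 2 - m ^ 2) ≤ t ^ 2 * (P ^ 2 - m ^ 2) := by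
    nlinarith [mul_nonneg (sq_nonneg m) (show (0:ℝ) ≤ P ^ 2 - t ^ 2 by nlinarith)]
  have h6 := Real.log_le_log (by positivity) h5
  rw [Real.log_mul (by positivity) hX.ne', Real.log_mul (by positivity) hY0.ne',
    Real.log_pow, Real.log_pow] at h6
  push_cast at h6
  have hlB : 0 ≤ lam * (Real.log (P ^ 2 - m ^ 2) - Real.log (t ^ 2 - m ^ 2)) :=
    mul_nonneg hlam0.le (by linarith)
  linarith

lemma stepB_tangent (lam w m : ℝ) (hlam0 : 0 < lam) (hlam1 : lam < 1)
    (hw : 0 < w) (hm : 0 ≤ m) :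
    (1 / 2) * Real.log (1 / (1 - lam ^ 2))
      - (lam / 2) * Real.log (w ^ 2 * (1 + lam) / (1 - lam))
    ≤ Real.log (w + m) - ((1 + lam) / 2) * (Real.log w + Real.log (w + 2 * m)) := by
  have h1p : (0:ℝ) < 1 + lam := by linarith
  have h1m : (0:ℝ) < 1 - lam := by linarith
  have hP0 : (0:ℝ) < w + m := by linarith
  have hw2m : (0:ℝ) < w + 2 * m := by linarith
  have E_rhs1 : Real.log (1 / (1 - lam ^ 2))
      = -(Real.log (1 - lam) + Real.log (1 + lam)) := by
    rw [one_div, Real.log_inv, show (1 : ℝ) - lam ^ 2 = (1 - lam) * (1 + lam) by ring,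
      Real.log_mul h1m.ne' h1p.ne']
  have E_rhs2 : Real.log (w ^ 2 * (1 + lam) / (1 - lam))
      = 2 * Real.log w + Real.log (1 + lam) - Real.log (1 - lam) := by
    rw [Real.log_div (by positivity) h1m.ne', Real.log_mul (by positivity) h1p.ne',
      Real.log_pow]
    push_cast; ring
  have T1 : 1 - (w + 2 * m) / ((1 + lam) * (w + m))
      ≤ Real.log (1 + lam) + Real.log (w + m) - Real.log (w + 2 * m) := by
    have h := Real.log_le_sub_one_of_pos
      (show 0 < (w + 2 * m) / ((1 + lam) * (w + m)) by positivity)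
    rw [Real.log_div hw2m.ne' (by positivity), Real.log_mul h1p.ne' hP0.ne'] at h
    linarith
  have T2 : 1 - w / ((1 - lam) * (w + m))
      ≤ Real.log (1 - lam) + Real.log (w + m) - Real.log w := by
    have h := Real.log_le_sub_one_of_pos
      (show 0 < w / ((1 - lam) * (w + m)) by positivity)
    rw [Real.log_div hw.ne' (by positivity), Real.log_mul h1m.ne' hP0.ne'] at h
    linarith
  have C1 := mul_le_mul_of_nonneg_left T1 (by linarith : (0:ℝ) ≤ (1 + lam) / 2)
  have C2 := mul_le_mul_of_nonneg_left T2 (by linarith : (0:ℝ) ≤ (1 - lam) / 2)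
  have E1 : ((1 + lam) / 2) * (1 - (w + 2 * m) / ((1 + lam) * (w + m)))
      = (1 + lam) / 2 - (w + 2 * m) / (2 * (w + m)) := by
    field_simp
  have E2 : ((1 - lam) / 2) * (1 - w / ((1 - lam) * (w + m)))
      = (1 - lam) / 2 - w / (2 * (w + m)) := by
    field_simp
  have E3 : (1 + lam) / 2 - (w + 2 * m) / (2 * (w + m))
      + ((1 - lam) / 2 - w / (2 * (w + m))) = 0 := by
    field_simp; ring
  rw [E_rhs1, E_rhs2]
  linarith [C1, C2, E1, E2, E3]

lemma core_log_ineq (lam ρ a b c : ℝ)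
    (hlam0 : 0 < lam) (hlam1 : lam < 1) (hlamρ : lam ≤ ρ) (hρ : ρ < 1)
    (ha : 0 < a) (hb : 0 < b) (ha1 : a ≤ 1) (hb1 : b ≤ 1)
    (hd : c ^ 2 < a * b) (hcon : (ρ - c) ^ 2 ≤ (1 - a) * (1 - b)) :
    (1 / 2) * Real.log (1 / (1 - lam ^ 2))
      - (lam / 2) * Real.log ((1 - ρ) ^ 2 * (1 + lam) / (1 - lam))
    ≤ (1 / 2) * Real.log a + (1 / 2) * Real.log b
      - ((1 + lam) / 2) * Real.log (a * b - c ^ 2) := by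
  have hρ0 : 0 < ρ := lt_of_lt_of_le hlam0 hlamρ
  have hw : 0 < 1 - ρ := by linarith
  have hm : 0 ≤ |c| := abs_nonneg c
  have hm2 : |c| ^ 2 = c ^ 2 := sq_abs c
  set t : ℝ := Real.sqrt (a * b) with ht_def
  have ht2 : t ^ 2 = a * b := Real.sq_sqrt (by positivity)
  have ht : 0 < t := Real.sqrt_pos.2 (by positivity)
  have htm : |c| < t := by nlinarith
  have ht1 : t ≤ 1 := by nlinarith
  have hab2 : 2 * t ≤ a + b := by
    have hsa : Real.sqrt a ^ 2 = a := Real.sq_sqrt ha.le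
    have hsb : Real.sqrt b ^ 2 = b := Real.sq_sqrt hb.le
    have htab : t = Real.sqrt a * Real.sqrt b := by
      rw [ht_def, ← Real.sqrt_mul ha.le]
    nlinarith [sq_nonneg (Real.sqrt a - Real.sqrt b)]
  have htP : t ≤ (1 - ρ) + |c| := by
    have h1 : (ρ - c) ^ 2 ≤ (1 - t) ^ 2 := by nlinarith
    have h2 : ρ - c ≤ 1 - t := by nlinarith
    have h3 : c ≤ |c| := le_abs_self c
    linarith
  have hA := stepA_mono lam t ((1 - ρ) + |c|) |c| hlam0 hm htm htP
  have hBc := stepB_tangent lam (1 - ρ) |c| hlam0 hlam1 hw hm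
  have E_P : Real.log (((1 - ρ) + |c|) ^ 2 - |c| ^ 2)
      = Real.log (1 - ρ) + Real.log ((1 - ρ) + 2 * |c|) := by
    rw [show ((1 - ρ) + |c|) ^ 2 - |c| ^ 2 = (1 - ρ) * ((1 - ρ) + 2 * |c|) by ring,
      Real.log_mul hw.ne' (by positivity)]
  have hlogab : Real.log a + Real.log b = 2 * Real.log t := by
    rw [← Real.log_mul ha.ne' hb.ne', ← ht2, Real.log_pow]
    push_cast; ring
  have hdm : a * b - c ^ 2 = t ^ 2 - |c| ^ 2 := by rw [ht2, hm2]
  rw [hdm]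
  rw [E_P] at hA
  linarith [hA, hBc, hlogab]

/-- **Lemma 2** (Gaussian covariance optimization): for `0 < λ < 1`, `λ ≤ ρ < 1`, and any
positive definite `K'` with `K' ⪯ [[1,ρ],[ρ,1]]`,
`h(X') + h(Y') − (1+λ)·h(X',Y') ≥ (1/2)log(1/(1−λ²)) − (λ/2)log((2πe)²(1−ρ)²(1+λ)/(1−λ))`
where `(X',Y') ~ N(0,K')`. -/
theorem gaussian_covariance_optimization
    (lam ρ : ℝ) (hlam0 : 0 < lam) (hlam1 : lam < 1) (hlamρ : lam ≤ ρ) (hρ : ρ < 1)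
    (K' : Matrix (Fin 2) (Fin 2) ℝ) (hK' : K'.PosDef)
    (hle : (Matrix.of ![![(1 : ℝ), ρ], ![ρ, 1]] - K').PosSemidef) :
    (1 / 2) * Real.log (1 / (1 - lam ^ 2))
      - (lam / 2) * Real.log ((2 * π * Real.exp 1) ^ 2 * (1 - ρ) ^ 2 * (1 + lam) / (1 - lam))
    ≤ (1 / 2) * Real.log (2 * π * Real.exp 1 * K' 0 0)
      + (1 / 2) * Real.log (2 * π * Real.exp 1 * K' 1 1)
      - ((1 + lam) / 2) * Real.log ((2 * π * Real.exp 1) ^ 2 * K'.det) := by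
  have hsym : K' 1 0 = K' 0 1 := by simpa using (hK'.1.apply 0 1)
  have ha : 0 < K' 0 0 := by
    have := hK'.dotProduct_mulVec_pos (x := ![1, 0]) (by simp [Matrix.vecHead])
    simpa [Matrix.mulVec, dotProduct, Fin.sum_univ_two] using this
  have hb : 0 < K' 1 1 := by
    have := hK'.dotProduct_mulVec_pos (x := ![0, 1]) (by simp [Matrix.vecHead, Matrix.vecTail])
    simpa [Matrix.mulVec, dotProduct, Fin.sum_univ_two] using this
  have hdetE : K'.det = K' 0 0 * K' 1 1 - K' 0 1 ^ 2 := by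
    rw [Matrix.det_fin_two, hsym]; ring
  have hdet : K' 0 1 ^ 2 < K' 0 0 * K' 1 1 := by
    have := hK'.det_pos
    rw [hdetE] at this; linarith
  have ha1 : K' 0 0 ≤ 1 := by
    have := hle.dotProduct_mulVec_nonneg ![1, 0]
    simp [Matrix.mulVec, dotProduct, Fin.sum_univ_two] at this
    linarith
  have hb1 : K' 1 1 ≤ 1 := by
    have := hle.dotProduct_mulVec_nonneg ![0, 1]
    simp [Matrix.mulVec, dotProduct, Fin.sum_univ_two] at this
    linarith
  have hquad : ∀ t : ℝ, 0 ≤ (1 - K' 0 0) * (t * t) + (2 * (ρ - K' 0 1)) * t + (1 - K' 1 1) := by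
    intro t
    have := hle.dotProduct_mulVec_nonneg ![t, 1]
    simp [Matrix.mulVec, dotProduct, Fin.sum_univ_two, hsym] at this
    nlinarith [this]
  have hdisc := discrim_le_zero hquad
  rw [discrim] at hdisc
  have hcon : (ρ - K' 0 1) ^ 2 ≤ (1 - K' 0 0) * (1 - K' 1 1) := by nlinarith [hdisc]
  have hcore := core_log_ineq lam ρ (K' 0 0) (K' 1 1) (K' 0 1)
    hlam0 hlam1 hlamρ hρ ha hb ha1 hb1 hdet hcon
  have hE : (0:ℝ) < 2 * π * Real.exp 1 := by positivity
  have h1p : (0:ℝ) < 1 + lam := by linarith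
  have h1m : (0:ℝ) < 1 - lam := by linarith
  have hw : (0:ℝ) < 1 - ρ := by linarith
  have l1 : Real.log (2 * π * Real.exp 1 * K' 0 0)
      = Real.log (2 * π * Real.exp 1) + Real.log (K' 0 0) := Real.log_mul hE.ne' ha.ne'
  have l2 : Real.log (2 * π * Real.exp 1 * K' 1 1)
      = Real.log (2 * π * Real.exp 1) + Real.log (K' 1 1) := Real.log_mul hE.ne' hb.ne'
  have l3 : Real.log ((2 * π * Real.exp 1) ^ 2 * K'.det)
      = 2 * Real.log (2 * π * Real.exp 1) + Real.log (K' 0 0 * K' 1 1 - K' 0 1 ^ 2) := by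
    rw [hdetE, Real.log_mul (by positivity) (by nlinarith : (K' 0 0 * K' 1 1 - K' 0 1 ^ 2) ≠ 0),
      Real.log_pow]
    push_cast; ring
  have l4 : Real.log ((2 * π * Real.exp 1) ^ 2 * (1 - ρ) ^ 2 * (1 + lam) / (1 - lam))
      = 2 * Real.log (2 * π * Real.exp 1) + Real.log ((1 - ρ) ^ 2 * (1 + lam) / (1 - lam)) := by
    rw [show (2 * π * Real.exp 1) ^ 2 * (1 - ρ) ^ 2 * (1 + lam) / (1 - lam)
        = (2 * π * Real.exp 1) ^ 2 * ((1 - ρ) ^ 2 * (1 + lam) / (1 - lam)) by ring,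
      Real.log_mul (by positivity) (by positivity), Real.log_pow]
    push_cast; ring
  rw [l1, l2, l3, l4]
  linarith [hcore]
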